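/- Let n be a positive integer, k in [1,n], epsilon > 0, and set m = floor((1/2)*(log2 k - log2 (log2 (1/epsilon)))). If m >= 1 and k >= 2^{2m} (i.e., k >= M^2 where M = 2^m), then the function f : {0,1}^n -> Z/2^m Z defined by f(w) = (sum of the bits of w) mod 2^m is a (k, epsilon)-resilient function, i.e., for every (n,k) oblivious bit-fixing source X, the statistical distance between f(X) and the uniform distribution on Z/2^m Z is at most epsilon. -/

import Mathlib

open Finset Complex Real



lemma count_eq (n k : ℕ) (N : ℕ) [NeZero N] (hkn : k ≤ n)
    (L : Finset (Fin n)) (hL : L.card = n - k) (a : Fin n → Bool) (y : ZMod N) :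
    (Finset.univ.filter fun w : Fin n → Bool =>
        (∀ i ∈ L, w i = a i) ∧ (∑ i, if w i then (1 : ZMod N) else 0) = y).card
    = ∑ t ∈ Finset.range (k + 1),
        if ((t : ZMod N) = y - ((L.filter fun i => a i = true).card : ZMod N))
        then k.choose t else 0 := by
  classical
  set c : ZMod N := ((L.filter fun i => a i = true).card : ZMod N) with hc
  have hF : Lᶜ.card = k := by
    rw [Finset.card_compl, hL, Fintype.card_fin]
    omega
  -- the number-of-trues computation, for any w agreeing with a on L
  have key : ∀ w : Fin n → Bool, (∀ i ∈ L, w i = a i) →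
      (∑ i, if w i then (1 : ZMod N) else 0)
        = c + (((Lᶜ.filter fun i => w i = true).card : ℕ) : ZMod N) := by
    intro w hwa
    rw [Finset.sum_boole]
    have hsplit : (Finset.univ.filter fun i => w i = true)
        = (L.filter fun i => w i = true) ∪ (Lᶜ.filter fun i => w i = true) := by
      rw [← Finset.filter_union, Finset.union_compl]
    have hLa : (L.filter fun i => w i = true) = (L.filter fun i => a i = true) :=
      Finset.filter_congr (fun i hi => by rw [hwa i hi])
    rw [hsplit, hLa, Finset.card_union_of_disjoint
      (Finset.disjoint_filter_filter disjoint_compl_right)]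
    push_cast
    rfl
  have h1 : (Finset.univ.filter fun w : Fin n → Bool =>
        (∀ i ∈ L, w i = a i) ∧ (∑ i, if w i then (1 : ZMod N) else 0) = y).card
      = (Lᶜ.powerset.filter fun T => ((T.card : ZMod N) = y - c)).card := by
    apply Finset.card_bij' (fun w _ => Lᶜ.filter fun i => w i = true)
      (fun T _ => fun i => if i ∈ L then a i else decide (i ∈ T))
    · intro w hw
      simp only [Finset.mem_filter, Finset.mem_univ, true_and] at hw
      obtain ⟨hwa, hws⟩ := hw
      rw [key w hwa] at hws
      simp only [Finset.mem_filter, Finset.mem_powerset, Finset.filter_subset, true_and]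
      rw [eq_sub_iff_add_eq, add_comm]
      exact hws
    · intro T hT
      simp only [Finset.mem_filter, Finset.mem_powerset] at hT
      obtain ⟨hTsub, hTc⟩ := hT
      have hwa : ∀ i ∈ L, (if i ∈ L then a i else decide (i ∈ T)) = a i := by
        intro i hi; rw [if_pos hi]
      have hTfix : (Lᶜ.filter fun i =>
          (if i ∈ L then a i else decide (i ∈ T)) = true) = T := by
        ext i
        simp only [Finset.mem_filter, Finset.mem_compl]
        constructor
        · rintro ⟨hiL, hval⟩
          rw [if_neg hiL] at hval
          simpa using hval
        · intro hiT
          have hiL : i ∉ L := by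
            have := hTsub hiT
            simpa using this
          exact ⟨hiL, by rw [if_neg hiL]; simpa using hiT⟩
      simp only [Finset.mem_filter, Finset.mem_univ, true_and]
      refine ⟨hwa, ?_⟩
      rw [key _ hwa, hTfix, ← eq_sub_iff_add_eq', ← hTc]
    · intro w hw
      simp only [Finset.mem_filter, Finset.mem_univ, true_and] at hw
      funext i
      by_cases hi : i ∈ L
      · simp [hi, hw.1 i hi]
      · simp [hi]
    · intro T hT
      simp only [Finset.mem_filter, Finset.mem_powerset] at hT
      ext i
      simp only [Finset.mem_filter, Finset.mem_compl]
      constructor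
      · rintro ⟨hiL, hval⟩
        rw [if_neg hiL] at hval
        simpa using hval
      · intro hiT
        have hiL : i ∉ L := by simpa using hT.1 hiT
        exact ⟨hiL, by rw [if_neg hiL]; simpa using hiT⟩
  -- step 2: group subsets by cardinality
  rw [h1, Finset.card_filter]
  have := Finset.sum_powerset_apply_card
    (f := fun t : ℕ => if ((t : ZMod N) = y - c) then (1 : ℕ) else 0) (x := Lᶜ)
  rw [this, hF]
  apply Finset.sum_congr rfl
  intro t _
  by_cases h : ((t : ZMod N) = y - c)
  · simp [h]
  · simp [h]



lemma filter_sum (N : ℕ) (hN : N ≠ 0) (s : ℕ) :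
    ∑ j ∈ Finset.range N, (Complex.exp (2 * ↑Real.pi * Complex.I / N) ^ s) ^ j
    = if (s : ZMod N) = 0 then (N : ℂ) else 0 := by
  have hprim := Complex.isPrimitiveRoot_exp N hN
  haveI : NeZero N := ⟨hN⟩
  by_cases h : (s : ZMod N) = 0
  · rw [if_pos h]
    have hdvd : N ∣ s := (ZMod.natCast_eq_zero_iff s N).1 h
    rw [(hprim.pow_eq_one_iff_dvd s).2 hdvd]
    simp
  · rw [if_neg h]
    have hne : Complex.exp (2 * ↑Real.pi * Complex.I / N) ^ s ≠ 1 := by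
      intro hone
      exact h ((ZMod.natCast_eq_zero_iff s N).2 ((hprim.pow_eq_one_iff_dvd s).1 hone))
    rw [geom_sum_eq hne]
    have : (Complex.exp (2 * ↑Real.pi * Complex.I / N) ^ s) ^ N = 1 := by
      rw [pow_right_comm, hprim.pow_eq_one, one_pow]
    rw [this]
    simp

lemma fourier_identity (k N : ℕ) (hN : 2 ≤ N) (d : ZMod N) :
    (N : ℂ) * (∑ t ∈ Finset.range (k + 1),
        if (t : ZMod N) = d then (k.choose t : ℂ) else 0)
    = (2 : ℂ) ^ k + ∑ j ∈ Finset.Ico 1 N,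
        Complex.exp (2 * ↑Real.pi * Complex.I / N) ^ ((N - d.val) * j)
          * (1 + Complex.exp (2 * ↑Real.pi * Complex.I / N) ^ j) ^ k := by
  haveI : NeZero N := ⟨by omega⟩
  set ζ := Complex.exp (2 * ↑Real.pi * Complex.I / N) with hζ
  have main : ∑ j ∈ Finset.range N, ζ ^ ((N - d.val) * j) * (1 + ζ ^ j) ^ k
      = (N : ℂ) * (∑ t ∈ Finset.range (k + 1),
          if (t : ZMod N) = d then (k.choose t : ℂ) else 0) := by
    have expand : ∀ j, ζ ^ ((N - d.val) * j) * (1 + ζ ^ j) ^ k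
        = ∑ t ∈ Finset.range (k + 1), (k.choose t : ℂ) * (ζ ^ (N - d.val + t)) ^ j := by
      intro j
      rw [add_comm (1 : ℂ) (ζ ^ j), add_pow, Finset.mul_sum]
      apply Finset.sum_congr rfl
      intro t _
      have hexp : (N - d.val + t) * j = (N - d.val) * j + j * t := by ring
      rw [one_pow, mul_one, ← pow_mul, ← pow_mul (ζ) (N - d.val + t) j, hexp, pow_add]
      ring
    calc ∑ j ∈ Finset.range N, ζ ^ ((N - d.val) * j) * (1 + ζ ^ j) ^ k
        = ∑ j ∈ Finset.range N, ∑ t ∈ Finset.range (k + 1),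
            (k.choose t : ℂ) * (ζ ^ (N - d.val + t)) ^ j := by
          exact Finset.sum_congr rfl fun j _ => expand j
      _ = ∑ t ∈ Finset.range (k + 1), (k.choose t : ℂ)
            * ∑ j ∈ Finset.range N, (ζ ^ (N - d.val + t)) ^ j := by
          rw [Finset.sum_comm]
          exact Finset.sum_congr rfl fun t _ => by rw [Finset.mul_sum]
      _ = ∑ t ∈ Finset.range (k + 1), (k.choose t : ℂ)
            * (if ((N - d.val + t : ℕ) : ZMod N) = 0 then (N : ℂ) else 0) := by
          exact Finset.sum_congr rfl fun t _ => by rw [filter_sum N (by omega)]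
      _ = (N : ℂ) * (∑ t ∈ Finset.range (k + 1),
            if (t : ZMod N) = d then (k.choose t : ℂ) else 0) := by
          rw [Finset.mul_sum]
          apply Finset.sum_congr rfl
          intro t _
          have hcond : (((N - d.val + t : ℕ) : ZMod N) = 0) ↔ ((t : ZMod N) = d) := by
            have hdle : d.val ≤ N := le_of_lt (ZMod.val_lt d)
            push_cast [Nat.cast_sub hdle]
            rw [ZMod.natCast_self, ZMod.natCast_zmod_val]
            constructor
            · intro h; linear_combination h
            · intro h; linear_combination h
          by_cases h : (t : ZMod N) = d
          · rw [if_pos (hcond.2 h), if_pos h]; ring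
          · rw [if_neg (fun hh => h (hcond.1 hh)), if_neg h]; ring
  rw [← main, Finset.range_eq_Ico, Finset.sum_eq_sum_Ico_succ_bot (by omega)]
  norm_num



lemma abs_dev_bound (k N : ℕ) (hN : 2 ≤ N) (d : ZMod N) :
    |(∑ t ∈ Finset.range (k + 1),
        if (t : ZMod N) = d then (k.choose t : ℝ) else 0) - 2 ^ k / N|
    ≤ (1 / N) * ∑ j ∈ Finset.Ico 1 N,
        ‖1 + Complex.exp (2 * ↑Real.pi * Complex.I / N) ^ j‖ ^ k := by
  set ζ := Complex.exp (2 * ↑Real.pi * Complex.I / N) with hζ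
  have hNC : (N : ℂ) ≠ 0 := by
    simpa using (by omega : N ≠ 0)
  have habsζ : ‖ζ‖ = 1 := by
    rw [hζ, Complex.norm_exp]
    have : (2 * ↑Real.pi * Complex.I / N).re = 0 := by
      simp [Complex.div_re]
    rw [this, Real.exp_zero]
  set Sr : ℝ := ∑ t ∈ Finset.range (k + 1),
      if (t : ZMod N) = d then (k.choose t : ℝ) else 0 with hSr
  set T : ℂ := ∑ j ∈ Finset.Ico 1 N, ζ ^ ((N - d.val) * j) * (1 + ζ ^ j) ^ k with hT
  have hcast : ((Sr : ℝ) : ℂ) = ∑ t ∈ Finset.range (k + 1),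
      if (t : ZMod N) = d then (k.choose t : ℂ) else 0 := by
    rw [hSr]
    push_cast [apply_ite (fun x : ℝ => (x : ℂ))]
    rfl
  have hdev : ((Sr - 2 ^ k / N : ℝ) : ℂ) = T / N := by
    have hfi := fourier_identity k N hN d
    rw [← hcast] at hfi
    push_cast
    field_simp
    linear_combination hfi
  have : |Sr - 2 ^ k / N| = ‖T / N‖ := by
    rw [← hdev, Complex.norm_real, Real.norm_eq_abs]
  rw [this, norm_div, Complex.norm_natCast]
  rw [div_le_iff₀ (by positivity), one_div, mul_comm (_ * _), ← mul_assoc,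
    mul_inv_cancel₀ (by positivity : (N:ℝ) ≠ 0), one_mul]
  calc ‖T‖ ≤ ∑ j ∈ Finset.Ico 1 N,
        ‖ζ ^ ((N - d.val) * j) * (1 + ζ ^ j) ^ k‖ := by
        exact norm_sum_le _ _
    _ = ∑ j ∈ Finset.Ico 1 N, ‖1 + ζ ^ j‖ ^ k := by
        apply Finset.sum_congr rfl
        intro j _
        rw [norm_mul, norm_pow, norm_pow, habsζ, one_pow, one_mul]



lemma abs_one_add_exp_sq (θ : ℝ) :
    ‖1 + Complex.exp (θ * Complex.I)‖ ^ 2 = 2 + 2 * Real.cos θ := by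
  have h1 : (1 + Complex.exp ((θ:ℂ) * Complex.I))
      = ((1 + Real.cos θ : ℝ) : ℂ) + ((Real.sin θ : ℝ) : ℂ) * Complex.I := by
    rw [Complex.exp_mul_I, ← Complex.ofReal_cos, ← Complex.ofReal_sin]
    push_cast
    ring
  rw [h1, Complex.sq_norm, Complex.normSq_add_mul_I]
  nlinarith [Real.sin_sq_add_cos_sq θ]

lemma term_bound (k N j : ℕ) (hN : 2 ≤ N) (hj1 : 1 ≤ j) (hj2 : j < N) :
    ‖1 + Complex.exp (2 * ↑Real.pi * Complex.I / N) ^ j‖ ^ k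
    ≤ 2 ^ k * (Real.exp (-(2 * k) / N ^ 2) ^ j + Real.exp (-(2 * k) / N ^ 2) ^ (N - j)) := by
  have hNpos : (0:ℝ) < N := by positivity
  set j' : ℕ := min j (N - j) with hj'
  have hj'1 : 1 ≤ j' := by omega
  have hj'2 : 2 * j' ≤ N := by omega
  -- rewrite ζ^j as exp(θ I)
  have hpow : Complex.exp (2 * ↑Real.pi * Complex.I / N) ^ j
      = Complex.exp (((2 * Real.pi * j / N : ℝ) : ℂ) * Complex.I) := by
    rw [← Complex.exp_nat_mul]
    congr 1
    push_cast
    ring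
  -- sin lower bound: sin (π j / N) ≥ 2 j' / N
  have hsin : (2 * j' / N : ℝ) ≤ Real.sin (Real.pi * j / N) := by
    rcases le_or_gt (2 * j) N with hcase | hcase
    · have hj'eq : (j' : ℝ) = j := by
        have h : j' = j := by omega
        rw [h]
      rw [hj'eq]
      have h0 : (0:ℝ) ≤ Real.pi * j / N := by positivity
      have h2 : Real.pi * j / N ≤ Real.pi / 2 := by
        rw [div_le_div_iff₀ hNpos (by norm_num)]
        have : (2 * j : ℝ) ≤ N := by exact_mod_cast hcase
        nlinarith [Real.pi_pos]
      have := Real.mul_le_sin h0 h2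
      calc (2 * j / N : ℝ) = 2 / Real.pi * (Real.pi * j / N) := by
            field_simp
        _ ≤ Real.sin (Real.pi * j / N) := this
    · have hj'eq : (j' : ℝ) = (N - j : ℕ) := by
        have h : j' = N - j := by omega
        rw [h]
      have hNj : ((N - j : ℕ) : ℝ) = (N : ℝ) - j := by
        push_cast [Nat.cast_sub hj2.le]
        ring
      rw [hj'eq, hNj]
      have hrefl : Real.sin (Real.pi * j / N)
          = Real.sin (Real.pi * ((N : ℝ) - j) / N) := by
        rw [← Real.sin_pi_sub]
        congr 1
        field_simp
      rw [hrefl]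
      have h0 : (0:ℝ) ≤ Real.pi * ((N:ℝ) - j) / N := by
        have hjN : (j:ℝ) ≤ N := by exact_mod_cast hj2.le
        apply div_nonneg _ hNpos.le
        exact mul_nonneg Real.pi_pos.le (by linarith)
      have h2 : Real.pi * ((N:ℝ) - j) / N ≤ Real.pi / 2 := by
        rw [div_le_div_iff₀ hNpos (by norm_num)]
        have : (N : ℝ) < 2 * j := by exact_mod_cast hcase
        nlinarith [Real.pi_pos]
      have := Real.mul_le_sin h0 h2
      calc (2 * ((N:ℝ) - j) / N : ℝ) = 2 / Real.pi * (Real.pi * ((N:ℝ) - j) / N) := by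
            field_simp
        _ ≤ _ := this
  -- square bound
  have hsq : ‖1 + Complex.exp (2 * ↑Real.pi * Complex.I / N) ^ j‖ ^ 2
      ≤ (2 * Real.exp (-(2 * j' ^ 2) / N ^ 2)) ^ 2 := by
    rw [hpow, abs_one_add_exp_sq]
    have hcos : Real.cos (2 * Real.pi * j / N)
        = 1 - 2 * Real.sin (Real.pi * j / N) ^ 2 := by
      have := Real.sin_sq_eq_half_sub (Real.pi * j / N)
      have harg : 2 * (Real.pi * j / N) = 2 * Real.pi * j / N := by ring
      rw [harg] at this
      linarith
    rw [hcos]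
    have hsin0 : (0:ℝ) ≤ 2 * j' / N := by positivity
    have hsinsq : (2 * j' / N : ℝ) ^ 2 ≤ Real.sin (Real.pi * j / N) ^ 2 :=
      pow_le_pow_left₀ hsin0 hsin 2
    have hexp : 1 - (2 * (j':ℝ) / N) ^ 2 ≤ Real.exp (-(4 * j' ^ 2) / N ^ 2) := by
      have h := Real.add_one_le_exp (-(4 * (j':ℝ) ^ 2) / N ^ 2)
      have : 1 - (2 * (j':ℝ) / N) ^ 2 = -(4 * (j':ℝ) ^ 2) / N ^ 2 + 1 := by
        field_simp
        ring
      rw [this]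
      exact h
    have hsq2 : (2 * Real.exp (-(2 * (j':ℝ) ^ 2) / N ^ 2)) ^ 2
        = 4 * Real.exp (-(4 * (j':ℝ) ^ 2) / N ^ 2) := by
      have harg : ((2:ℕ):ℝ) * (-(2 * (j':ℝ) ^ 2) / N ^ 2) = -(4 * (j':ℝ) ^ 2) / N ^ 2 := by
        push_cast
        ring
      rw [mul_pow, ← Real.exp_nat_mul, harg]
      norm_num
    rw [hsq2]
    nlinarith
  -- take square roots
  have habs0 : (0:ℝ) ≤ ‖1 + Complex.exp (2 * ↑Real.pi * Complex.I / N) ^ j‖ :=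
    norm_nonneg _
  have hroot : ‖1 + Complex.exp (2 * ↑Real.pi * Complex.I / N) ^ j‖
      ≤ 2 * Real.exp (-(2 * (j':ℝ) ^ 2) / N ^ 2) := by
    nlinarith [hsq, habs0, Real.exp_pos (-(2 * (j':ℝ) ^ 2) / N ^ 2)]
  -- raise to k-th power
  have hk : ‖1 + Complex.exp (2 * ↑Real.pi * Complex.I / N) ^ j‖ ^ k
      ≤ (2 * Real.exp (-(2 * (j':ℝ) ^ 2) / N ^ 2)) ^ k :=
    pow_le_pow_left₀ habs0 hroot k
  refine hk.trans ?_
  rw [mul_pow]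
  have hq : Real.exp (-(2 * (j':ℝ) ^ 2) / N ^ 2) ^ k
      ≤ Real.exp (-(2 * k) / N ^ 2) ^ j' := by
    rw [← Real.exp_nat_mul, ← Real.exp_nat_mul]
    apply Real.exp_le_exp.2
    have hN2 : (0:ℝ) < (N:ℝ) ^ 2 := by positivity
    rw [mul_div_assoc', mul_div_assoc', div_le_div_iff₀ hN2 hN2]
    have hj'sq : (j':ℝ) ≤ (j':ℝ) ^ 2 := by
      nlinarith [(by exact_mod_cast hj'1 : (1:ℝ) ≤ (j':ℝ))]
    nlinarith [mul_nonneg (mul_nonneg (by positivity : (0:ℝ) ≤ 2 * (k:ℝ))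
      (sub_nonneg.2 hj'sq)) hN2.le]
  refine mul_le_mul_of_nonneg_left (hq.trans ?_) (by positivity)
  rcases min_cases j (N - j) with ⟨hmin, _⟩ | ⟨hmin, _⟩
  · rw [hj', hmin]
    exact le_add_of_nonneg_right (by positivity)
  · rw [hj', hmin]
    exact le_add_of_nonneg_left (by positivity)



lemma geom_tail_le (q : ℝ) (hq0 : 0 ≤ q) (hq : q ≤ 1 / 2) (N : ℕ) :
    ∑ j ∈ Finset.Ico 1 N, q ^ j ≤ 2 * q := by
  rw [Finset.sum_Ico_eq_sum_range]
  have h1 : ∀ i, q ^ (1 + i) = q * q ^ i := fun i => by rw [pow_add, pow_one]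
  calc ∑ i ∈ Finset.range (N - 1), q ^ (1 + i)
      = q * ∑ i ∈ Finset.range (N - 1), q ^ i := by
        rw [Finset.mul_sum]
        exact Finset.sum_congr rfl fun i _ => h1 i
    _ ≤ q * 2 := by
        apply mul_le_mul_of_nonneg_left _ hq0
        calc ∑ i ∈ Finset.range (N - 1), q ^ i
            ≤ ∑ i ∈ Finset.range (N - 1), (1 / 2 : ℝ) ^ i :=
              Finset.sum_le_sum fun i _ => pow_le_pow_left₀ hq0 hq i
          _ ≤ 2 := sum_geometric_two_le _
    _ = 2 * q := by ring

lemma sum_terms_le (k N : ℕ) (hN : 2 ≤ N)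
    (hhalf : Real.exp (-(2 * k) / N ^ 2) ≤ 1 / 2) :
    ∑ j ∈ Finset.Ico 1 N, ‖1 + Complex.exp (2 * ↑Real.pi * Complex.I / N) ^ j‖ ^ k
    ≤ 2 ^ k * (4 * Real.exp (-(2 * k) / N ^ 2)) := by
  set q : ℝ := Real.exp (-(2 * k) / N ^ 2) with hqdef
  have hq0 : 0 ≤ q := (Real.exp_pos _).le
  have hrefl : ∑ j ∈ Finset.Ico 1 N, q ^ (N - j) = ∑ j ∈ Finset.Ico 1 N, q ^ j := by
    apply Finset.sum_nbij' (fun j => N - j) (fun j => N - j)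
    · intro a ha
      simp only [Finset.mem_Ico] at ha ⊢
      omega
    · intro a ha
      simp only [Finset.mem_Ico] at ha ⊢
      omega
    · intro a ha
      simp only [Finset.mem_Ico] at ha
      omega
    · intro a ha
      simp only [Finset.mem_Ico] at ha
      omega
    · intro a _
      rfl
  calc ∑ j ∈ Finset.Ico 1 N, ‖1 + Complex.exp (2 * ↑Real.pi * Complex.I / N) ^ j‖ ^ k
      ≤ ∑ j ∈ Finset.Ico 1 N, 2 ^ k * (q ^ j + q ^ (N - j)) := by
        apply Finset.sum_le_sum
        intro j hj
        simp only [Finset.mem_Ico] at hj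
        exact term_bound k N j hN hj.1 hj.2
    _ = 2 ^ k * (∑ j ∈ Finset.Ico 1 N, q ^ j + ∑ j ∈ Finset.Ico 1 N, q ^ (N - j)) := by
        rw [← Finset.sum_add_distrib, Finset.mul_sum]
    _ = 2 ^ k * (2 * ∑ j ∈ Finset.Ico 1 N, q ^ j) := by
        rw [hrefl]; ring
    _ ≤ 2 ^ k * (2 * (2 * q)) := by
        apply mul_le_mul_of_nonneg_left _ (by positivity)
        exact mul_le_mul_of_nonneg_left (geom_tail_le q hq0 hhalf N) (by norm_num)
    _ = 2 ^ k * (4 * q) := by ring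



lemma numeric_final (k m : ℕ) (ε : ℝ) (hk1 : 1 ≤ k) (hε : 0 < ε)
    (hm : (m : ℤ) = ⌊(1 / 2 : ℝ) * (Real.logb 2 k - Real.logb 2 (Real.logb 2 (1 / ε)))⌋)
    (hm1 : 1 ≤ m) (hkM : 2 ^ (2 * m) ≤ k) :
    2 * Real.exp (-(2 * k) / ((2 : ℝ) ^ m) ^ 2) ≤ ε := by
  set N2 : ℝ := ((2 : ℝ) ^ m) ^ 2 with hN2def
  have hN2pos : (0:ℝ) < N2 := by positivity
  have hN2eq : N2 = (2 : ℝ) ^ (2 * m) := by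
    rw [hN2def, ← pow_mul, mul_comm]
  set r : ℝ := (k : ℝ) / N2 with hrdef
  have hkR : (2:ℝ) ^ (2 * m) ≤ (k:ℝ) := by exact_mod_cast hkM
  have hr1 : 1 ≤ r := by
    rw [hrdef, le_div_iff₀ hN2pos, one_mul, hN2eq]
    exact hkR
  set L : ℝ := Real.logb 2 (1 / ε) with hLdef
  -- step 1: L ≤ r
  have hLr : L ≤ r := by
    rcases le_or_gt L 0 with hL0 | hL0
    · linarith
    · -- use the floor hypothesis
      have hfl : (m : ℝ) ≤ (1 / 2 : ℝ) * (Real.logb 2 k - Real.logb 2 L) := by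
        have h1 : ((m : ℤ) : ℝ) ≤ (1 / 2 : ℝ) * (Real.logb 2 k - Real.logb 2 L) := by
          rw [hm, hLdef]
          exact Int.floor_le _
        exact_mod_cast h1
      have hklog : Real.logb 2 (N2 * L) ≤ Real.logb 2 k := by
        rw [Real.logb_mul (by positivity) (ne_of_gt hL0), hN2eq,
          Real.logb_pow]
        have h2 : Real.logb 2 2 = 1 := Real.logb_self_eq_one (by norm_num)
        rw [h2]
        push_cast
        linarith
      have hN2L : N2 * L ≤ k := by
        have hNL0 : (0:ℝ) < N2 * L := by positivity
        have hk0 : (0:ℝ) < k := by exact_mod_cast hk1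
        calc N2 * L = (2:ℝ) ^ Real.logb 2 (N2 * L) := by
              rw [Real.rpow_logb (by norm_num) (by norm_num) hNL0]
          _ ≤ (2:ℝ) ^ Real.logb 2 (k:ℝ) :=
              Real.rpow_le_rpow_of_exponent_le (by norm_num) hklog
          _ = k := Real.rpow_logb (by norm_num) (by norm_num) hk0
      rw [hrdef, le_div_iff₀ hN2pos]
      linarith [hN2L]
  -- step 2: 2 * exp (-2 r) ≤ 2^(1 - 2r) ≤ 2^(-r) ≤ 2^(-L) = ε
  have harg : -(2 * (k:ℝ)) / N2 = -2 * r := by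
    rw [hrdef]
    field_simp
  rw [harg]
  have hr0 : (0:ℝ) ≤ r := by linarith
  have hexp4 : Real.exp (-2 * r) ≤ (2:ℝ) ^ (-2 * r : ℝ) := by
    have h1 : Real.exp (-2 * r) = (Real.exp (-2)) ^ (r : ℝ) := by
      rw [← Real.exp_mul]
    have h2 : ((2:ℝ) ^ (-2 * r : ℝ)) = ((2:ℝ) ^ (-2 : ℝ)) ^ (r : ℝ) :=
      Real.rpow_mul (by norm_num) _ _
    rw [h1, h2]
    apply Real.rpow_le_rpow (Real.exp_pos _).le _ hr0
    -- exp (-2) ≤ 2^(-2) = 1/4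
    have he : (4:ℝ) ≤ Real.exp 2 := by
      have h3 : (2.7:ℝ) ≤ Real.exp 1 := by
        have := Real.exp_one_gt_d9
        linarith
      have h4 : Real.exp 2 = Real.exp 1 * Real.exp 1 := by
        rw [← Real.exp_add]; norm_num
      nlinarith
    have h5 : Real.exp (-2) = (Real.exp 2)⁻¹ := by
      rw [← Real.exp_neg]
    have h6 : ((2:ℝ) ^ (-2:ℝ)) = (1:ℝ)/4 := by
      rw [Real.rpow_neg (by norm_num), show ((2:ℝ)^(2:ℝ)) = 4 by
        rw [show (2:ℝ) = ((2:ℕ):ℝ) by norm_num, Real.rpow_natCast]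
        norm_num]
      norm_num
    rw [h5, h6]
    rw [inv_le_comm₀ (by positivity) (by norm_num)]
    linarith
  calc 2 * Real.exp (-2 * r) ≤ 2 * (2:ℝ) ^ (-2 * r : ℝ) := by linarith [hexp4]
    _ = (2:ℝ) ^ (1 + (-2 * r) : ℝ) := by
        rw [Real.rpow_add (by norm_num), Real.rpow_one]
    _ ≤ (2:ℝ) ^ (-r : ℝ) := by
        apply Real.rpow_le_rpow_of_exponent_le (by norm_num)
        linarith
    _ ≤ (2:ℝ) ^ (-L : ℝ) := by
        apply Real.rpow_le_rpow_of_exponent_le (by norm_num)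
        linarith
    _ = ε := by
        rw [hLdef, one_div, Real.logb_inv, neg_neg]
        exact Real.rpow_logb (by norm_num) (by norm_num) hε



/-- The sum-of-bits mod `2^m` function is a `(k, ε)`-resilient function when
`m = ⌊(1/2)(log₂ k - log₂ log₂ (1/ε))⌋ ≥ 1` and `k ≥ 2^(2m)`: every `(n,k)`
oblivious bit-fixing source (positions in `L`, `|L| = n-k`, fixed to `a`) is mapped
within statistical distance `ε` of uniform on `ZMod (2^m)`. -/
theorem sum_mod_is_resilient (n k m : ℕ) (ε : ℝ)
    (hn : 1 ≤ n) (hk1 : 1 ≤ k) (hkn : k ≤ n) (hε : 0 < ε)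
    (hm : (m : ℤ) = ⌊(1 / 2 : ℝ) * (Real.logb 2 k - Real.logb 2 (Real.logb 2 (1 / ε)))⌋)
    (hm1 : 1 ≤ m) (hkM : 2 ^ (2 * m) ≤ k)
    (L : Finset (Fin n)) (hL : L.card = n - k) (a : Fin n → Bool) :
    (1 / 2 : ℝ) * ∑ y : ZMod (2 ^ m),
        |((Finset.univ.filter fun w : Fin n → Bool =>
            (∀ i ∈ L, w i = a i) ∧ (∑ i, if w i then (1 : ZMod (2 ^ m)) else 0) = y).card : ℝ)
            / 2 ^ k - 1 / 2 ^ m| ≤ ε := by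
  classical
  set N : ℕ := 2 ^ m with hNdef
  have hN2 : 2 ≤ N := by
    rw [hNdef]
    calc 2 = 2 ^ 1 := by norm_num
      _ ≤ 2 ^ m := Nat.pow_le_pow_right (by norm_num) hm1
  haveI : NeZero N := ⟨by omega⟩
  have hNcast : ((N : ℕ) : ℝ) = (2 : ℝ) ^ m := by
    rw [hNdef]; push_cast; ring
  set q : ℝ := Real.exp (-(2 * k) / (N : ℝ) ^ 2) with hqdef
  have hq0 : 0 < q := Real.exp_pos _
  have hkN2 : (N : ℝ) ^ 2 ≤ (k : ℝ) := by
    have : (2 : ℕ) ^ (2 * m) ≤ k := hkM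
    have h2 : ((2 : ℕ) ^ (2 * m) : ℝ) ≤ (k : ℝ) := by exact_mod_cast this
    calc (N : ℝ) ^ 2 = ((2 : ℕ) ^ (2 * m) : ℝ) := by
          rw [hNcast]; push_cast; rw [← pow_mul, mul_comm]
      _ ≤ (k : ℝ) := h2
  have hhalf : q ≤ 1 / 2 := by
    rw [hqdef]
    have hexp2 : Real.exp (-(2 * (k:ℝ)) / (N : ℝ) ^ 2) ≤ Real.exp (-2) := by
      apply Real.exp_le_exp.2
      rw [div_le_iff₀ (by positivity)]
      nlinarith [hkN2]
    refine hexp2.trans ?_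
    have he : (4:ℝ) ≤ Real.exp 2 := by
      have h3 : (2.7:ℝ) ≤ Real.exp 1 := by
        have := Real.exp_one_gt_d9
        linarith
      have h4 : Real.exp 2 = Real.exp 1 * Real.exp 1 := by
        rw [← Real.exp_add]; norm_num
      nlinarith
    rw [Real.exp_neg, inv_le_comm₀ (by positivity) (by norm_num)]
    linarith
  -- per-y bound
  have hy : ∀ y : ZMod N,
      |((Finset.univ.filter fun w : Fin n → Bool =>
          (∀ i ∈ L, w i = a i) ∧ (∑ i, if w i then (1 : ZMod N) else 0) = y).card : ℝ)
          / 2 ^ k - 1 / 2 ^ m| ≤ 4 * q / (N : ℝ) := by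
    intro y
    set c : ZMod N := ((L.filter fun i => a i = true).card : ZMod N) with hc
    set d : ZMod N := y - c with hd
    have hcount := count_eq n k N hkn L hL a y
    have hcast : ((Finset.univ.filter fun w : Fin n → Bool =>
        (∀ i ∈ L, w i = a i) ∧ (∑ i, if w i then (1 : ZMod N) else 0) = y).card : ℝ)
        = ∑ t ∈ Finset.range (k + 1),
            if (t : ZMod N) = d then (k.choose t : ℝ) else 0 := by
      rw [hcount]
      push_cast [apply_ite (fun x : ℕ => (x : ℝ))]
      rfl
    set Sr : ℝ := ∑ t ∈ Finset.range (k + 1),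
        if (t : ZMod N) = d then (k.choose t : ℝ) else 0 with hSr
    have hrw : ((Finset.univ.filter fun w : Fin n → Bool =>
        (∀ i ∈ L, w i = a i) ∧ (∑ i, if w i then (1 : ZMod N) else 0) = y).card : ℝ)
          / 2 ^ k - 1 / 2 ^ m = (Sr - 2 ^ k / (N : ℝ)) / 2 ^ k := by
      rw [hcast, sub_div]
      congr 1
      rw [div_div, eq_div_iff (by positivity)]
      rw [one_div, inv_mul_eq_div, div_eq_iff (by positivity), hNcast]
      ring
    rw [hrw, abs_div, abs_of_pos (by positivity : (0:ℝ) < (2:ℝ) ^ k),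
      div_le_iff₀ (by positivity : (0:ℝ) < (2:ℝ) ^ k)]
    calc |Sr - 2 ^ k / (N:ℝ)| ≤ (1 / N) * ∑ j ∈ Finset.Ico 1 N,
          ‖1 + Complex.exp (2 * ↑Real.pi * Complex.I / N) ^ j‖ ^ k :=
          abs_dev_bound k N hN2 d
      _ ≤ (1 / N) * (2 ^ k * (4 * q)) := by
          apply mul_le_mul_of_nonneg_left _ (by positivity)
          exact sum_terms_le k N hN2 hhalf
      _ = 4 * q / (N:ℝ) * 2 ^ k := by
          field_simp
  calc (1 / 2 : ℝ) * ∑ y : ZMod N,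
        |((Finset.univ.filter fun w : Fin n → Bool =>
            (∀ i ∈ L, w i = a i) ∧ (∑ i, if w i then (1 : ZMod N) else 0) = y).card : ℝ)
            / 2 ^ k - 1 / 2 ^ m|
      ≤ (1 / 2 : ℝ) * ∑ _y : ZMod N, (4 * q / (N : ℝ)) := by
        apply mul_le_mul_of_nonneg_left _ (by norm_num)
        exact Finset.sum_le_sum fun y _ => hy y
    _ = (1 / 2 : ℝ) * ((N : ℝ) * (4 * q / (N : ℝ))) := by
        rw [Finset.sum_const, Finset.card_univ, ZMod.card, nsmul_eq_mul]
    _ = 2 * q := by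
        have hNne : (N:ℝ) ≠ 0 := by positivity
        field_simp
        ring
    _ ≤ ε := by
        have := numeric_final k m ε hk1 hε hm hm1 hkM
        rw [hqdef, hNcast]
        exact this
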